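/- For every real p ≥ 1 and every n-dimensional convex polytope P containing the origin in its interior, the p-th power of the L^p norm of the piecewise affine function ℓ_P (equal to 1 at the origin, 0 outside P, and affine on each cone over a facet of P with apex 0) equals |P| / C(n+p, n); that is, ∫_{ℝ^n} ℓ_P(x)^p dx = (Γ(p+1)Γ(n+1)/Γ(n+p+1)) |P|. -/

import Mathlib

open MeasureTheory Real Pointwise

lemma beta_aux (p : ℝ) (hp : 0 < p) (n : ℕ) :
    ∫ s in (0:ℝ)..1, s ^ (p - 1) * (1 - s) ^ n
      = Real.Gamma p * Real.Gamma (n + 1) / Real.Gamma (p + (n + 1)) := by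
  have hs : 0 < (p : ℂ).re := by simpa using hp
  have ht : 0 < ((n : ℂ) + 1).re := by
    simp only [Complex.add_re, Complex.natCast_re, Complex.one_re]
    positivity
  have h := Complex.Gamma_mul_Gamma_eq_betaIntegral hs ht
  have hβ : Complex.betaIntegral (p : ℂ) ((n : ℂ) + 1)
      = ((∫ s in (0:ℝ)..1, s ^ (p - 1) * (1 - s) ^ n : ℝ) : ℂ) := by
    rw [Complex.betaIntegral, ← intervalIntegral.integral_ofReal]
    apply intervalIntegral.integral_congr
    intro x hx
    rw [Set.uIcc_of_le zero_le_one] at hx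
    have hx0 : (0:ℝ) ≤ x := hx.1
    have hx1 : (0:ℝ) ≤ 1 - x := by linarith [hx.2]
    symm
    show ((x ^ (p - 1) * (1 - x) ^ n : ℝ) : ℂ) = (x:ℂ) ^ ((p:ℂ) - 1) * (1 - (x:ℂ)) ^ ((n:ℂ) + 1 - 1)
    rw [Complex.ofReal_mul, Complex.ofReal_cpow hx0, Complex.ofReal_pow]
    push_cast
    congr 1
    rw [show (n : ℂ) + 1 - 1 = (n : ℂ) by ring, Complex.cpow_natCast]
  rw [hβ, Complex.Gamma_ofReal, show ((n:ℂ) + 1) = ((((n:ℝ)+1) : ℝ) : ℂ) by push_cast; ring,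
    Complex.Gamma_ofReal, show ((p:ℂ) + ((((n:ℝ)+1) : ℝ) : ℂ)) = (((p + (n+1)) : ℝ) : ℂ) by push_cast; ring,
    Complex.Gamma_ofReal, ← Complex.ofReal_mul, ← Complex.ofReal_mul, Complex.ofReal_inj] at h
  have hΓ : Real.Gamma (p + (n + 1)) ≠ 0 := (Real.Gamma_pos_of_pos (by positivity)).ne'
  field_simp [hΓ] at h ⊢
  linarith [h]


lemma subst_aux (p : ℝ) (hp : 1 ≤ p) (n : ℕ) :
    ∫ t in (0:ℝ)..1, (1 - t ^ p⁻¹) ^ n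
      = p * ∫ s in (0:ℝ)..1, s ^ (p - 1) * (1 - s) ^ n := by
  have hp0 : 0 < p := lt_of_lt_of_le one_pos hp
  have hg : Continuous fun t : ℝ => (1 - t ^ p⁻¹) ^ n := by
    have h1 : Continuous fun t : ℝ => t ^ p⁻¹ := by
      rw [continuous_iff_continuousAt]
      intro x
      exact Real.continuousAt_rpow_const x p⁻¹ (Or.inr (by positivity))
    exact (continuous_const.sub h1).pow n
  have hderiv : ∀ x ∈ Set.uIcc (0:ℝ) 1,
      HasDerivAt (fun s : ℝ => s ^ p) (p * x ^ (p - 1)) x :=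
    fun x _ => Real.hasDerivAt_rpow_const (Or.inr hp)
  have h' : Continuous fun x : ℝ => p * x ^ (p - 1) := by
    rcases eq_or_lt_of_le hp with h1 | h1
    · simp only [← h1, sub_self, Real.rpow_zero]
      exact continuous_const
    · refine continuous_const.mul ?_
      rw [continuous_iff_continuousAt]
      intro x
      exact Real.continuousAt_rpow_const x (p - 1) (Or.inr (by linarith))
  have key := intervalIntegral.integral_comp_smul_deriv hderiv h'.continuousOn hg
  rw [Real.zero_rpow hp0.ne', Real.one_rpow] at key
  rw [← key]
  rw [show (p * ∫ s in (0:ℝ)..1, s ^ (p - 1) * (1 - s) ^ n)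
      = ∫ s in (0:ℝ)..1, p * (s ^ (p - 1) * (1 - s) ^ n) from
    (intervalIntegral.integral_const_mul _ _).symm]
  apply intervalIntegral.integral_congr
  intro x hx
  rw [Set.uIcc_of_le zero_le_one] at hx
  have hx0 : (0:ℝ) ≤ x := hx.1
  simp only [smul_eq_mul, Function.comp_apply]
  rw [← Real.rpow_natCast (1 - (x ^ p) ^ p⁻¹) n, ← Real.rpow_mul hx0, mul_inv_cancel₀ hp0.ne',
    Real.rpow_one, Real.rpow_natCast]
  ring


/-- For `p ≥ 1` and a convex polytope `P ⊆ ℝⁿ` with `0` in its interior,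
the `p`-th power of the `Lᵖ` norm of the piecewise affine function
`ℓ_P(x) = max 0 (1 - gauge P x)` equals `(Γ(p+1)Γ(n+1)/Γ(n+p+1)) |P|`. -/
theorem stmt0 (n : ℕ) (hn : 0 < n) (p : ℝ) (hp : 1 ≤ p)
    (P : Set (EuclideanSpace ℝ (Fin n)))
    (hpoly : ∃ V : Finset (EuclideanSpace ℝ (Fin n)),
      P = convexHull ℝ (V : Set (EuclideanSpace ℝ (Fin n))))
    (h0 : 0 ∈ interior P) :
    ∫ x, (max 0 (1 - gauge P x)) ^ p =
      (Real.Gamma (p + 1) * Real.Gamma (n + 1) / Real.Gamma (n + p + 1)) *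
        (volume P).toReal := by
  obtain ⟨V, hV⟩ := hpoly
  have hconv : Convex ℝ P := hV ▸ convex_convexHull ℝ _
  have hcomp : IsCompact P := hV ▸ V.finite_toSet.isCompact_convexHull ℝ
  have hnhds : P ∈ nhds 0 := mem_interior_iff_mem_nhds.mp h0
  have habs : Absorbent ℝ P := absorbent_nhds_zero hnhds
  have h0P : (0 : EuclideanSpace ℝ (Fin n)) ∈ P := interior_subset h0
  have hp0 : 0 < p := lt_of_lt_of_le one_pos hp
  have hg_cont : Continuous (gauge P) := continuous_gauge hconv hnhds
  set f : EuclideanSpace ℝ (Fin n) → ℝ := fun x => (max 0 (1 - gauge P x)) ^ p with hf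
  have hf_cont : Continuous f := by
    rw [continuous_iff_continuousAt]
    intro x
    exact (Real.continuousAt_rpow_const _ p (Or.inr hp0.le)).comp
      ((continuous_const.max (continuous_const.sub hg_cont)).continuousAt)
  have hf_nonneg : ∀ x, 0 ≤ f x := fun x => Real.rpow_nonneg (le_max_left _ _) p
  have hf_le_one : ∀ x, f x ≤ 1 := by
    intro x
    refine Real.rpow_le_one (le_max_left _ _) ?_ hp0.le
    exact max_le zero_le_one (by linarith [gauge_nonneg (s := P) x])
  have hzero : ∀ x ∉ P, f x = 0 := by
    intro x hxP
    have h1 : 1 ≤ gauge P x := by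
      by_contra hlt
      push_neg at hlt
      exact hxP (gauge_lt_one_subset_self hconv h0P habs hlt)
    rw [hf]
    simp only
    rw [max_eq_left (by linarith), Real.zero_rpow hp0.ne']
  have hcs : HasCompactSupport f := HasCompactSupport.intro hcomp hzero
  have hint : Integrable f := hf_cont.integrable_of_hasCompactSupport hcs
  have hvol_ne : volume P ≠ ⊤ := hcomp.measure_lt_top.ne
  have hIntP : volume (interior P) = volume P := by
    have hfr : volume (frontier P) = 0 := hconv.addHaar_frontier volume
    have hieq : interior P = P \ frontier P := by
      rw [hcomp.isClosed.frontier_eq, Set.diff_diff_cancel_left interior_subset]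
    rw [hieq, measure_diff_null hfr]
  have hmeas : ∀ t ∈ Set.Ioo (0:ℝ) 1,
      volume {x | t < f x} = ENNReal.ofReal ((1 - t ^ p⁻¹) ^ n) * volume P := by
    intro t ht
    set c := 1 - t ^ p⁻¹ with hc
    have hs1 : t ^ p⁻¹ < 1 := Real.rpow_lt_one ht.1.le ht.2 (by positivity)
    have hs0 : 0 < t ^ p⁻¹ := Real.rpow_pos_of_pos ht.1 _
    have hc0 : 0 < c := by rw [hc]; linarith
    have hset : {x | t < f x} = c • interior P := by
      ext x
      have h1 : t < f x ↔ t ^ p⁻¹ < max 0 (1 - gauge P x) :=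
        (Real.rpow_inv_lt_iff_of_pos ht.1.le (le_max_left _ _) hp0).symm
      have h2 : (t ^ p⁻¹ < max 0 (1 - gauge P x)) ↔ gauge P x < c := by
        rw [lt_max_iff]
        constructor
        · rintro (h | h)
          · linarith
          · rw [hc]; linarith
        · intro h; right; rw [hc] at h; linarith
      have h3 : x ∈ c • interior P ↔ gauge P x < c := by
        rw [Set.mem_smul_set_iff_inv_smul_mem₀ hc0.ne',
          ← gauge_lt_one_iff_mem_interior hconv hnhds,
          gauge_smul_of_nonneg (inv_nonneg.mpr hc0.le), smul_eq_mul,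
          inv_mul_lt_iff₀ hc0, mul_one]
      simp only [Set.mem_setOf_eq]
      rw [h1, h2, h3]
    rw [hset, MeasureTheory.Measure.addHaar_smul_of_nonneg volume hc0.le,
      finrank_euclideanSpace_fin, hIntP]
  have hmeas0 : ∀ t : ℝ, 1 ≤ t → {x | t < f x} = ∅ := by
    intro t ht
    rw [Set.eq_empty_iff_forall_notMem]
    intro x hx
    exact absurd hx (not_lt.mpr ((hf_le_one x).trans ht))
  rw [show (∫ x, (max 0 (1 - gauge P x)) ^ p) = ∫ x, f x from rfl,
    hint.integral_eq_integral_meas_lt (Filter.Eventually.of_forall hf_nonneg)]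
  have hstep : ∫ t in Set.Ioi (0:ℝ), ((volume {a | t < f a}).toReal)
      = ∫ t in Set.Ioi (0:ℝ),
        Set.indicator (Set.Ioo 0 1) (fun t => (1 - t ^ p⁻¹) ^ n * (volume P).toReal) t := by
    apply setIntegral_congr_fun measurableSet_Ioi
    intro t ht
    dsimp only
    by_cases h01 : t ∈ Set.Ioo (0:ℝ) 1
    · have h1t : t ^ p⁻¹ < 1 := Real.rpow_lt_one h01.1.le h01.2 (by positivity)
      rw [Set.indicator_of_mem h01, hmeas t h01, ENNReal.toReal_mul,
        ENNReal.toReal_ofReal (pow_nonneg (by linarith) n)]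
    · have ht1 : 1 ≤ t := by
        rcases lt_or_ge t 1 with h | h
        · exact absurd ⟨ht, h⟩ h01
        · exact h
      rw [Set.indicator_of_notMem h01, hmeas0 t ht1, measure_empty, ENNReal.toReal_zero]
  show ∫ t in Set.Ioi (0:ℝ), (volume {a | t < f a}).toReal = _
  rw [hstep, MeasureTheory.integral_indicator measurableSet_Ioo,
    MeasureTheory.Measure.restrict_restrict measurableSet_Ioo,
    show Set.Ioo (0:ℝ) 1 ∩ Set.Ioi 0 = Set.Ioo 0 1 from
      Set.inter_eq_left.mpr (fun x hx => hx.1),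
    MeasureTheory.integral_mul_const,
    ← MeasureTheory.integral_Ioc_eq_integral_Ioo,
    ← intervalIntegral.integral_of_le zero_le_one,
    subst_aux p hp n, beta_aux p hp0 n]
  rw [show Real.Gamma (p + 1) = p * Real.Gamma p from by
      rw [Real.Gamma_add_one hp0.ne'],
    show p + ((n : ℝ) + 1) = (n : ℝ) + p + 1 from by ring]
  ring
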